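/- Let n ≥ 1 and let X be an (n−1)-dimensional linear subspace of ℓ_∞^n (ℝ^n with the supremum norm). Then there exist 2^{⌊n/2⌋} points in X that are pairwise equidistant in the supremum norm; that is, the equilateral dimension of X is at least 2^{⌊n/2⌋}. -/

import Mathlib

/-- On a line `{(x,y) : c*A + d*B = 0}` in the plane there is always a point of sup-norm `1`. -/
lemma equilateral_aux_pair (A B : ℝ) : ∃ cd : ℝ × ℝ,
    cd.1 * A + cd.2 * B = 0 ∧ |cd.1| ≤ 1 ∧ |cd.2| ≤ 1 ∧ (|cd.1| = 1 ∨ |cd.2| = 1) := by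
  rcases le_or_gt |A| |B| with h | h
  · refine ⟨(1, -A / B), ?_, by norm_num, ?_, Or.inl (by norm_num)⟩
    · by_cases hB : B = 0
      · have hA : A = 0 := by
          rw [hB, abs_zero] at h
          exact abs_nonpos_iff.mp h
        simp [hA, hB]
      · field_simp; ring
    · by_cases hB : B = 0
      · simp [hB]
      · rw [abs_div, abs_neg, div_le_one (abs_pos.mpr hB)]
        exact h
  · have hA : A ≠ 0 := by
      intro h0
      rw [h0, abs_zero] at h
      exact absurd h (not_lt.mpr (abs_nonneg B))
    refine ⟨(-B / A, 1), ?_, ?_, by norm_num, Or.inr (by norm_num)⟩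
    · field_simp; ring
    · rw [abs_div, abs_neg, div_le_one (abs_pos.mpr hA)]
      exact h.le

theorem equilateral_codim_one_subspace_linf (n : ℕ) (hn : 1 ≤ n)
    (X : Submodule ℝ (Fin n → ℝ)) (hdim : Module.finrank ℝ X = n - 1) :
    ∃ p : Fin (2 ^ (n / 2)) → (Fin n → ℝ), (∀ i, p i ∈ X) ∧
      ∃ d : ℝ, 0 < d ∧ ∀ i j, i ≠ j → ‖p i - p j‖ = d := by
  classical
  -- Step 1: X is contained in the kernel of a nonzero functional φ, and equals it.
  have hne : X ≠ ⊤ := by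
    intro h
    rw [h, finrank_top, Module.finrank_fintype_fun_eq_card, Fintype.card_fin] at hdim
    omega
  obtain ⟨φ, hφ0, hφmap⟩ :=
    Submodule.exists_dual_map_eq_bot_of_lt_top (lt_top_iff_ne_top.mpr hne) inferInstance
  have hXker : X ≤ LinearMap.ker φ := by
    intro x hx
    have hm : φ x ∈ X.map φ := Submodule.mem_map_of_mem hx
    rw [hφmap] at hm
    simpa using hm
  have hrange : LinearMap.range φ = ⊤ := by
    obtain ⟨x, hx⟩ := DFunLike.ne_iff.mp hφ0
    simp only [LinearMap.zero_apply] at hx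
    rw [Submodule.eq_top_iff']
    intro r
    exact ⟨(r * (φ x)⁻¹) • x, by rw [map_smul, smul_eq_mul]; field_simp⟩
  have hXeq : X = LinearMap.ker φ := by
    apply Submodule.eq_of_le_of_finrank_le hXker
    have h1 := LinearMap.finrank_range_add_finrank_ker φ
    rw [hrange, finrank_top, Module.finrank_self, Module.finrank_fintype_fun_eq_card,
      Fintype.card_fin] at h1
    rw [hdim]
    omega
  -- Step 2: coefficients of φ
  set a : Fin n → ℝ := fun i => φ (Pi.single i 1) with ha
  have hφsum : ∀ x : Fin n → ℝ, φ x = ∑ i, x i * a i := by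
    intro x
    conv_lhs => rw [← Finset.univ_sum_single x]
    rw [map_sum]
    refine Finset.sum_congr rfl fun i _ => ?_
    have hsingle : (Pi.single i (x i) : Fin n → ℝ) = x i • (Pi.single i 1 : Fin n → ℝ) := by
      rw [← Pi.single_smul, smul_eq_mul, mul_one]
    rw [hsingle, map_smul, smul_eq_mul, ha]
  -- Step 3: the pair positions and vectors
  set m := n / 2 with hm
  have hI0lt : ∀ k : Fin m, 2 * k.1 < n := fun k => by have := k.2; omega
  have hI1lt : ∀ k : Fin m, 2 * k.1 + 1 < n := fun k => by have := k.2; omega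
  set I0 : Fin m → Fin n := fun k => ⟨2 * k.1, hI0lt k⟩ with hI0
  set I1 : Fin m → Fin n := fun k => ⟨2 * k.1 + 1, hI1lt k⟩ with hI1
  have hI01 : ∀ k, I0 k ≠ I1 k := by
    intro k h
    have := congrArg Fin.val h
    simp [hI0, hI1] at this
  have huniq : ∀ (k l : Fin m) (t : Fin n), (t = I0 k ∨ t = I1 k) →
      (t = I0 l ∨ t = I1 l) → k = l := by
    intro k l t h1 h2
    apply Fin.ext
    rcases h1 with rfl | rfl <;> rcases h2 with h2 | h2 <;>
      · have := congrArg Fin.val h2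
        simp only [hI0, hI1] at this
        omega
  choose cd hker0 hc1 hd1 hone using fun k : Fin m => equilateral_aux_pair (a (I0 k)) (a (I1 k))
  set v : Fin m → Fin n → ℝ :=
    fun k i => if i = I0 k then (cd k).1 else if i = I1 k then (cd k).2 else 0 with hv
  have hsupp : ∀ k t, v k t ≠ 0 → t = I0 k ∨ t = I1 k := by
    intro k t h
    by_contra hcon
    push_neg at hcon
    simp [hv, hcon.1, hcon.2] at h
  have hvbound : ∀ k t, |v k t| ≤ 1 := by
    intro k t
    simp only [hv]
    split_ifs
    · exact hc1 k
    · exact hd1 k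
    · norm_num
  -- the "big" coordinate of each pair
  set T : Fin m → Fin n := fun k => if |(cd k).1| = 1 then I0 k else I1 k with hT
  have hTpair : ∀ k, T k = I0 k ∨ T k = I1 k := by
    intro k; simp only [hT]; split_ifs <;> [left; right] <;> rfl
  have hTval : ∀ k, |v k (T k)| = 1 := by
    intro k
    simp only [hT, hv]
    by_cases h : |(cd k).1| = 1
    · simp [h]
    · rw [if_neg h, if_neg (Ne.symm (hI01 k)), if_pos rfl]
      rcases hone k with h1 | h1
      · exact absurd h1 h
      · exact h1
  -- each v k lies in X
  have hvX : ∀ k, v k ∈ X := by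
    intro k
    rw [hXeq, LinearMap.mem_ker, hφsum]
    have hzero : ∀ i ∈ Finset.univ, i ∉ ({I0 k, I1 k} : Finset (Fin n)) → v k i * a i = 0 := by
      intro i _ hi
      simp only [Finset.mem_insert, Finset.mem_singleton, not_or] at hi
      simp [hv, hi.1, hi.2]
    rw [← Finset.sum_subset (Finset.subset_univ ({I0 k, I1 k} : Finset (Fin n))) hzero]
    rw [Finset.sum_pair (hI01 k)]
    have h0 : v k (I0 k) = (cd k).1 := by simp [hv]
    have h1 : v k (I1 k) = (cd k).2 := by simp [hv, Ne.symm (hI01 k)]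
    rw [h0, h1]
    exact hker0 k
  -- Step 4: the points
  set E : Fin (2 ^ m) → (Fin m → Fin 2) := fun i => finFunctionFinEquiv.symm i with hE
  have hEinj : Function.Injective E := finFunctionFinEquiv.symm.injective
  set sgn : Fin 2 → ℝ := fun b => (b.1 : ℝ) * 2 with hsgn
  refine ⟨fun i => ∑ k, sgn (E i k) • v k, ?_, 2, by norm_num, ?_⟩
  · intro i
    exact Submodule.sum_mem X fun k _ => Submodule.smul_mem X _ (hvX k)
  · intro i j hij
    set ε : Fin m → ℝ := fun k => sgn (E i k) - sgn (E j k) with hε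
    have hεb : ∀ k, |ε k| ≤ 2 := by
      intro k
      simp only [hε, hsgn]
      have h1 : (E i k).1 < 2 := (E i k).2
      have h2 : (E j k).1 < 2 := (E j k).2
      interval_cases h1' : (E i k).1 <;> interval_cases h2' : (E j k).1 <;> norm_num
    have hx : (∑ k, sgn (E i k) • v k) - (∑ k, sgn (E j k) • v k) = ∑ k, ε k • v k := by
      rw [← Finset.sum_sub_distrib]
      refine Finset.sum_congr rfl fun k _ => ?_
      rw [hε, sub_smul]
    rw [hx]
    set x : Fin n → ℝ := ∑ k, ε k • v k with hxdef
    have hxcoord : ∀ t, x t = ∑ k, ε k * v k t := by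
      intro t
      rw [hxdef]
      simp [Finset.sum_apply]
    -- at most one nonzero term per coordinate
    have hsingle : ∀ (k0 : Fin m) (t : Fin n), (t = I0 k0 ∨ t = I1 k0) →
        x t = ε k0 * v k0 t := by
      intro k0 t ht
      rw [hxcoord]
      refine Finset.sum_eq_single k0 (fun l _ hl => ?_) (fun h => absurd (Finset.mem_univ k0) h)
      by_contra hne0
      have hvl : v l t ≠ 0 := fun h0 => hne0 (by rw [h0, mul_zero])
      exact hl (huniq l k0 t (hsupp l t hvl) ht)
    -- upper bound on coordinates
    have hupper : ∀ t, |x t| ≤ 2 := by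
      intro t
      by_cases h : ∃ k0 : Fin m, t = I0 k0 ∨ t = I1 k0
      · obtain ⟨k0, hk0⟩ := h
        rw [hsingle k0 t hk0, abs_mul]
        calc |ε k0| * |v k0 t| ≤ 2 * 1 :=
              mul_le_mul (hεb k0) (hvbound k0 t) (abs_nonneg _) (by norm_num)
          _ = 2 := by norm_num
      · push_neg at h
        have hz : x t = 0 := by
          rw [hxcoord]
          refine Finset.sum_eq_zero fun k _ => ?_
          by_contra h0
          have hvk : v k t ≠ 0 := fun hz => h0 (by rw [hz, mul_zero])
          rcases hsupp k t hvk with h1 | h1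
          · exact (h k).1 h1
          · exact (h k).2 h1
        rw [hz]; norm_num
    -- there is a coordinate where |x| = 2
    obtain ⟨k0, hk0⟩ : ∃ k0, E i k0 ≠ E j k0 := by
      by_contra hcon
      push_neg at hcon
      exact hij (hEinj (funext hcon))
    have hεk0 : |ε k0| = 2 := by
      simp only [hε, hsgn]
      have h1 : (E i k0).1 < 2 := (E i k0).2
      have h2 : (E j k0).1 < 2 := (E j k0).2
      have hne' : (E i k0).1 ≠ (E j k0).1 := fun h => hk0 (Fin.ext h)
      interval_cases h1' : (E i k0).1 <;> interval_cases h2' : (E j k0).1 <;>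
        first | (exfalso; exact hne' rfl) | norm_num
    have hlow : |x (T k0)| = 2 := by
      rw [hsingle k0 (T k0) (hTpair k0), abs_mul, hTval k0, hεk0]
      norm_num
    refine le_antisymm ?_ ?_
    · refine (pi_norm_le_iff_of_nonneg (by norm_num)).mpr fun t => ?_
      rw [Real.norm_eq_abs]
      exact hupper t
    · calc (2:ℝ) = |x (T k0)| := hlow.symm
        _ = ‖x (T k0)‖ := (Real.norm_eq_abs _).symm
        _ ≤ ‖x‖ := norm_le_pi_norm x (T k0)
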